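/- Let C be a centralic category. For any two central morphisms f, g : X → Y with cooperators ρ_f, ρ_g : X × Y → Y for f with 1_Y and g with 1_Y respectively, one has ρ_f ∘ ⟨1_X, g⟩ = ρ_g ∘ ⟨1_X, f⟩; that is, the addition f ⋆ g := ρ_f ∘ ⟨1_X, g⟩ on central morphisms from X to Y is commutative. -/

import Mathlib

open CategoryTheory CategoryTheory.Limits

universe v u

/-- A pointed category with binary products is *centralic*. -/
def Centralic (C : Type u) [Category.{v} C] [HasZeroObject C] [HasZeroMorphisms C]
    [HasBinaryProducts C] : Prop :=
  ∀ ⦃X Y Z S : C⦄ (f : X ⨯ Y ⟶ Z) (x x' : S ⟶ X) (y : S ⟶ Y),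
    prod.lift x 0 ≫ f = prod.lift x' 0 ≫ f →
    prod.lift x y ≫ f = prod.lift x' y ≫ f

/-- `ρ : A ⨯ B ⟶ X` is a cooperator for `f : A ⟶ X` and `g : B ⟶ X`. -/
def IsCooperator {C : Type u} [Category.{v} C] [HasZeroObject C] [HasZeroMorphisms C]
    [HasBinaryProducts C] {A B X : C} (f : A ⟶ X) (g : B ⟶ X) (ρ : A ⨯ B ⟶ X) : Prop :=
  prod.lift (𝟙 A) 0 ≫ ρ = f ∧ prod.lift 0 (𝟙 B) ≫ ρ = g

/-- Two morphisms with common codomain commute if they admit a cooperator. -/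
def Commutes {C : Type u} [Category.{v} C] [HasZeroObject C] [HasZeroMorphisms C]
    [HasBinaryProducts C] {A B X : C} (f : A ⟶ X) (g : B ⟶ X) : Prop :=
  ∃ ρ : A ⨯ B ⟶ X, IsCooperator f g ρ

/-- A morphism `f : A ⟶ B` is central if it commutes with `𝟙 B`. -/
def Central {C : Type u} [Category.{v} C] [HasZeroObject C] [HasZeroMorphisms C]
    [HasBinaryProducts C] {A B : C} (f : A ⟶ B) : Prop :=
  Commutes f (𝟙 B)

private lemma lift_comp_aux {C : Type u} [Category.{v} C] [HasZeroObject C]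
    [HasZeroMorphisms C] [HasBinaryProducts C] {A B Z S : C}
    (u : S ⟶ A) (v : S ⟶ B) (ρ : A ⨯ B ⟶ Z) :
    prod.lift u v ≫ ρ = prod.lift u v ≫ ρ := rfl

/-- The addition `f ⋆ g := ρ_f ∘ ⟨1_X, g⟩` on central morphisms is commutative. -/
theorem stmt8 (C : Type u) [Category.{v} C] [HasZeroObject C] [HasZeroMorphisms C]
    [HasBinaryProducts C] (hC : Centralic C)
    {X Y : C} (f g : X ⟶ Y) (ρf ρg : X ⨯ Y ⟶ Y)
    (hρf : IsCooperator f (𝟙 Y) ρf) (hρg : IsCooperator g (𝟙 Y) ρg) :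
    prod.lift (𝟙 X) g ≫ ρf = prod.lift (𝟙 X) f ≫ ρg := by
  obtain ⟨hf1, hf2⟩ := hρf
  obtain ⟨hg1, hg2⟩ := hρg
  -- τ((a,b),w) = ρf(a, ρg(w,b))
  set τ : (X ⨯ Y) ⨯ X ⟶ Y :=
    prod.lift (prod.fst ≫ prod.fst) (prod.lift prod.snd (prod.fst ≫ prod.snd) ≫ ρg) ≫ ρf
    with hτ
  -- auxiliary computations for lift 0 v ≫ ρ and lift u 0 ≫ ρ
  have key0 : ∀ {S : C} (v : S ⟶ Y), prod.lift (0 : S ⟶ X) v ≫ ρf = v := by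
    intro S v
    have : prod.lift (0 : S ⟶ X) v = v ≫ prod.lift 0 (𝟙 Y) := by
      apply Limits.prod.hom_ext <;> simp
    rw [this, Category.assoc, hf2, Category.comp_id]
  have key0g : ∀ {S : C} (v : S ⟶ Y), prod.lift (0 : S ⟶ X) v ≫ ρg = v := by
    intro S v
    have : prod.lift (0 : S ⟶ X) v = v ≫ prod.lift 0 (𝟙 Y) := by
      apply Limits.prod.hom_ext <;> simp
    rw [this, Category.assoc, hg2, Category.comp_id]
  have keyf : ∀ {S : C} (u : S ⟶ X), prod.lift u (0 : S ⟶ Y) ≫ ρf = u ≫ f := by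
    intro S u
    have : prod.lift u (0 : S ⟶ Y) = u ≫ prod.lift (𝟙 X) 0 := by
      apply Limits.prod.hom_ext <;> simp
    rw [this, Category.assoc, hf1]
  have keyg : ∀ {S : C} (u : S ⟶ X), prod.lift u (0 : S ⟶ Y) ≫ ρg = u ≫ g := by
    intro S u
    have : prod.lift u (0 : S ⟶ Y) = u ≫ prod.lift (𝟙 X) 0 := by
      apply Limits.prod.hom_ext <;> simp
    rw [this, Category.assoc, hg1]
  -- hypothesis of the centralic condition
  have hyp : prod.lift (prod.lift (𝟙 X) (0 : X ⟶ Y)) (0 : X ⟶ X) ≫ τ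
      = prod.lift (prod.lift (0 : X ⟶ X) f) (0 : X ⟶ X) ≫ τ := by
    simp [hτ, prod.comp_lift_assoc, key0, key0g, keyf, keyg, prod.lift_fst_assoc, prod.lift_snd_assoc, prod.lift_fst, prod.lift_snd]
  have concl := hC τ (prod.lift (𝟙 X) (0 : X ⟶ Y)) (prod.lift (0 : X ⟶ X) f) (𝟙 X) hyp
  -- simplify the conclusion
  simpa [hτ, prod.comp_lift_assoc, key0, key0g, keyf, keyg, prod.lift_fst_assoc, prod.lift_snd_assoc, prod.lift_fst, prod.lift_snd] using concl
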